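/- For real numbers a, b, c, d, e ≥ 0, let Δ₅(a,b,c,d,e) ⊂ ℝ⁵ be defined by: u₁,…,u₅ ≥ 0; u₁ ≤ a+b+d; u₅ ≤ e; u₃+u₅ ≤ c+e; u₄+u₅ ≤ d+e; u₁+u₄+u₅ ≤ a+b+d+e; u₂+u₃+u₅ ≤ b+c+d+e; u₂+u₄+u₅ ≤ b+c+d+e; u₁+u₂+u₃+u₅ ≤ a+b+c+d+e; u₁+u₂+u₄+u₅ ≤ a+b+c+d+e; u₂+u₃+u₄+2u₅ ≤ b+c+d+2e; u₁+u₂+u₃+u₄+2u₅ ≤ a+b+c+d+2e. Then: (i) the top slice {u ∈ Δ₅(a,b,c,d,e) : u₅ = e} equals Δ₄(a,b,c,d)×{e}; and (ii) the bottom slice {u ∈ Δ₅(a,b,c,d,e) : u₅ = 0} equals the codimension-two truncation of Δ₄(a,b,c+e,d+e) obtained by intersecting it with the five half-spaces {u₁ ≤ a+b+d}, {u₂+u₃ ≤ b+c+d+e}, {u₂+u₄ ≤ b+c+d+e}, {u₁+u₂+u₃ ≤ a+b+c+d+e}, {u₁+u₂+u₄ ≤ a+b+c+d+e} (slices are regarded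 in ℝ⁴ via (u₁,u₂,u₃,u₄)). -/
import Mathlib


/-- The polytope `Δ₄(a,b,c,d) ⊂ ℝ⁴`. -/
def Delta4 (a b c d : ℝ) : Set (Fin 4 → ℝ) :=
  {v | 0 ≤ v 0 ∧ 0 ≤ v 1 ∧ 0 ≤ v 2 ∧ 0 ≤ v 3 ∧ v 2 ≤ c ∧ v 3 ≤ d ∧
    v 0 + v 3 ≤ a + b + d ∧ v 1 + v 2 + v 3 ≤ b + c + d ∧
    v 0 + v 1 + v 2 + v 3 ≤ a + b + c + d}

/-- The polytope `Δ₅(a,b,c,d,e) ⊂ ℝ⁵`. -/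
def Delta5 (a b c d e : ℝ) : Set (Fin 5 → ℝ) :=
  {u | (∀ i, 0 ≤ u i) ∧ u 0 ≤ a + b + d ∧ u 4 ≤ e ∧ u 2 + u 4 ≤ c + e ∧
    u 3 + u 4 ≤ d + e ∧ u 0 + u 3 + u 4 ≤ a + b + d + e ∧
    u 1 + u 2 + u 4 ≤ b + c + d + e ∧ u 1 + u 3 + u 4 ≤ b + c + d + e ∧
    u 0 + u 1 + u 2 + u 4 ≤ a + b + c + d + e ∧
    u 0 + u 1 + u 3 + u 4 ≤ a + b + c + d + e ∧
    u 1 + u 2 + u 3 + 2 * u 4 ≤ b + c + d + 2 * e ∧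
    u 0 + u 1 + u 2 + u 3 + 2 * u 4 ≤ a + b + c + d + 2 * e}

/-- The projection `ℝ⁵ → ℝ⁴` forgetting the last coordinate `u₅`. -/
def proj54 (u : Fin 5 → ℝ) (k : Fin 4) : ℝ := u k.castSucc

/-- The slices of `Δ₅`: the top slice `{u₅ = e}` is `Δ₄(a,b,c,d)` and the bottom slice
`{u₅ = 0}` is the codimension-two truncation of `Δ₄(a,b,c+e,d+e)` by the five
half-spaces `u₁ ≤ a+b+d`, `u₂+u₃ ≤ b+c+d+e`, `u₂+u₄ ≤ b+c+d+e`,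
`u₁+u₂+u₃ ≤ a+b+c+d+e`, `u₁+u₂+u₄ ≤ a+b+c+d+e` (slices regarded in `ℝ⁴` via
`(u₁,u₂,u₃,u₄)`). -/
theorem Delta5_slices (a b c d e : ℝ)
    (ha : 0 ≤ a) (hb : 0 ≤ b) (hc : 0 ≤ c) (hd : 0 ≤ d) (he : 0 ≤ e) :
    proj54 '' {u | u ∈ Delta5 a b c d e ∧ u 4 = e} = Delta4 a b c d ∧
    proj54 '' {u | u ∈ Delta5 a b c d e ∧ u 4 = 0} =
      Delta4 a b (c + e) (d + e) ∩
        {v | v 0 ≤ a + b + d ∧ v 1 + v 2 ≤ b + c + d + e ∧ v 1 + v 3 ≤ b + c + d + e ∧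
          v 0 + v 1 + v 2 ≤ a + b + c + d + e ∧
          v 0 + v 1 + v 3 ≤ a + b + c + d + e} := by
  have key : ∀ u : Fin 5 → ℝ, proj54 u 0 = u 0 ∧ proj54 u 1 = u 1 ∧ proj54 u 2 = u 2 ∧
      proj54 u 3 = u 3 := fun u => ⟨rfl, rfl, rfl, rfl⟩
  constructor
  · ext v
    simp only [Set.mem_image, Set.mem_setOf_eq]
    constructor
    · rintro ⟨u, ⟨⟨hpos, h1, h2, h3, h4, h5, h6, h7, h8, h9, h10, h11⟩, h4e⟩, rfl⟩
      have e0 := hpos 0; have e1 := hpos 1; have e2 := hpos 2; have e3 := hpos 3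
      obtain ⟨p0, p1, p2, p3⟩ := key u
      simp only [Delta4, Set.mem_setOf_eq, p0, p1, p2, p3]
      rw [h4e] at h3 h4 h5 h10 h11
      refine ⟨e0, e1, e2, e3, by linarith, by linarith, by linarith, by linarith, by linarith⟩
    · rintro ⟨h0, h1, h2, h3, h4, h5, h6, h7, h8⟩
      refine ⟨![v 0, v 1, v 2, v 3, e], ⟨⟨?_, ?_, ?_, ?_, ?_, ?_, ?_, ?_, ?_, ?_, ?_, ?_⟩, ?_⟩, ?_⟩
      · intro i; fin_cases i <;> first | exact h0 | exact h1 | exact h2 | exact h3 | exact he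
      all_goals try simp only [Matrix.cons_val_zero, Matrix.cons_val_one, Matrix.head_cons,
        Matrix.cons_val_two, Matrix.tail_cons, Matrix.cons_val_three, Matrix.cons_val_four]
      · linarith
      · linarith
      · linarith
      · linarith
      · linarith
      · linarith
      · linarith
      · linarith
      · linarith
      · linarith
      · linarith
      · funext k; fin_cases k <;> rfl
  · ext v
    simp only [Set.mem_image, Set.mem_setOf_eq, Set.mem_inter_iff]
    constructor
    · rintro ⟨u, ⟨⟨hpos, h1, h2, h3, h4, h5, h6, h7, h8, h9, h10, h11⟩, h40⟩, rfl⟩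
      have e0 := hpos 0; have e1 := hpos 1; have e2 := hpos 2; have e3 := hpos 3
      obtain ⟨p0, p1, p2, p3⟩ := key u
      simp only [Delta4, Set.mem_setOf_eq, p0, p1, p2, p3]
      rw [h40] at h3 h4 h5 h6 h7 h8 h9 h10 h11
      exact ⟨⟨e0, e1, e2, e3, by linarith, by linarith, by linarith, by linarith, by linarith⟩,
        by linarith, by linarith, by linarith, by linarith, by linarith⟩
    · rintro ⟨⟨h0, h1, h2, h3, h4, h5, h6, h7, h8⟩, t1, t2, t3, t4, t5⟩
      refine ⟨![v 0, v 1, v 2, v 3, 0], ⟨⟨?_, ?_, ?_, ?_, ?_, ?_, ?_, ?_, ?_, ?_, ?_, ?_⟩, ?_⟩, ?_⟩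
      · intro i; fin_cases i <;> first | exact h0 | exact h1 | exact h2 | exact h3 | exact le_refl 0
      all_goals try simp only [Matrix.cons_val_zero, Matrix.cons_val_one, Matrix.head_cons,
        Matrix.cons_val_two, Matrix.tail_cons, Matrix.cons_val_three, Matrix.cons_val_four]
      · linarith
      · linarith
      · linarith
      · linarith
      · linarith
      · linarith
      · linarith
      · linarith
      · linarith
      · linarith
      · linarith
      · funext k; fin_cases k <;> rfl
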